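/- There exists no finite simple graph on a nonempty vertex set that is 4-regular and in which the subgraph induced by the open neighbourhood of every vertex has exactly 5 edges; that is, no (4,5)-constant graph exists. -/

import Mathlib

/-- The number of edges of the subgraph of `G` induced by the open
neighbourhood of the vertex `v` (the quantity `e(v)`). -/
noncomputable def nbhdEdgeCount {V : Type*} (G : SimpleGraph V) (v : V) : ℕ :=
  Nat.card (SimpleGraph.induce (G.neighborSet v) G).edgeSet

open Finset SimpleGraph

/-- No (4,5)-constant graph exists: there is no finite simple graph on a
nonempty vertex set that is 4-regular and in which the subgraph induced by
the open neighbourhood of every vertex has exactly 5 edges. -/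
theorem no_four_five_constant_graph :
    ¬ ∃ (V : Type) (_ : Fintype V) (_ : Nonempty V) (G : SimpleGraph V),
      (∀ v : V, Nat.card (G.neighborSet v) = 4) ∧
      (∀ v : V, nbhdEdgeCount G v = 5) := by
  rintro ⟨V, _, hne, G, hreg, hedge⟩
  classical
  set N : V → Finset V := fun v => G.neighborFinset v with hN
  have hmemN : ∀ v z : V, z ∈ N v ↔ G.Adj v z := by
    intro v z; rw [hN]; exact mem_neighborFinset G v z
  have hcard : ∀ v, (N v).card = 4 := by
    intro v
    have := hreg v
    rwa [Nat.card_eq_fintype_card, card_neighborSet_eq_degree] at this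
  -- degree sum inside a neighbourhood
  have h10 : ∀ v, (∑ y ∈ N v, ((N v).filter (fun z => G.Adj y z)).card) = 10 := by
    intro v
    have h5 : (G.induce (G.neighborSet v)).edgeFinset.card = 5 := by
      have := hedge v
      rw [nbhdEdgeCount, Nat.card_eq_fintype_card] at this
      rw [SimpleGraph.edgeFinset_card]; convert this
    have hds : (∑ b : (G.neighborSet v), (G.induce (G.neighborSet v)).degree b) = 10 := by
      rw [SimpleGraph.sum_degrees_eq_twice_card_edges, h5]
    have hdeg : ∀ b : (G.neighborSet v),
        (G.induce (G.neighborSet v)).degree b = ((N v).filter (fun z => G.Adj ↑b z)).card := by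
      intro b
      rw [← card_neighborFinset_eq_degree]
      refine Finset.card_bij (fun z _ => (z : V)) ?_ ?_ ?_
      · intro z hz
        rw [mem_neighborFinset] at hz
        rw [Finset.mem_filter, hmemN]
        exact ⟨z.2, hz⟩
      · intro z₁ _ z₂ _ h
        exact Subtype.ext h
      · intro y hy
        rw [Finset.mem_filter, hmemN] at hy
        exact ⟨⟨y, hy.1⟩, by rw [mem_neighborFinset]; exact hy.2, rfl⟩
    calc (∑ y ∈ N v, ((N v).filter (fun z => G.Adj y z)).card)
        = ∑ b : (G.neighborSet v), ((N v).filter (fun z => G.Adj ↑b z)).card := by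
          refine (Finset.sum_subtype (N v) ?_ _)
          intro x; rw [hmemN]; rfl
      _ = 10 := by rw [← hds]; exact Finset.sum_congr rfl (fun b _ => (hdeg b).symm)
  -- the key counting fact: every neighbourhood misses exactly "2 ordered pairs"
  have hsum : ∀ v, (∑ y ∈ N v, ((N v).filter (fun z => z ≠ y ∧ ¬ G.Adj y z)).card) = 2 := by
    intro v
    have hsplit : ∀ y ∈ N v,
        ((N v).filter (fun z => G.Adj y z)).card
          + ((N v).filter (fun z => z ≠ y ∧ ¬ G.Adj y z)).card = 3 := by
      intro y hy
      have hdisj : Disjoint ((N v).filter (fun z => G.Adj y z))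
          ((N v).filter (fun z => z ≠ y ∧ ¬ G.Adj y z)) := by
        rw [Finset.disjoint_left]
        intro z h1 h2
        rw [Finset.mem_filter] at h1 h2
        exact h2.2.2 h1.2
      rw [← Finset.card_union_of_disjoint hdisj]
      have huni : ((N v).filter (fun z => G.Adj y z))
          ∪ ((N v).filter (fun z => z ≠ y ∧ ¬ G.Adj y z)) = (N v).erase y := by
        ext z
        simp only [Finset.mem_union, Finset.mem_filter, Finset.mem_erase]
        constructor
        · rintro (⟨hz, ha⟩ | ⟨hz, hne, _⟩)
          · exact ⟨fun h => G.irrefl (h ▸ ha), hz⟩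
          · exact ⟨hne, hz⟩
        · rintro ⟨hne, hz⟩
          by_cases ha : G.Adj y z
          · exact Or.inl ⟨hz, ha⟩
          · exact Or.inr ⟨hz, hne, ha⟩
      rw [huni, Finset.card_erase_of_mem hy, hcard v]
    have hgl := Finset.sum_congr rfl hsplit
    rw [Finset.sum_add_distrib, h10 v, Finset.sum_const, hcard v, smul_eq_mul] at hgl
    omega
  -- now pick any vertex and extract the structure of its neighbourhood
  obtain ⟨v⟩ := hne
  have hvv : v ∉ N v := by rw [hmemN]; exact G.irrefl
  -- find a non-adjacent pair c, d in N v
  have hex : ∃ c ∈ N v, ((N v).filter (fun z => z ≠ c ∧ ¬ G.Adj c z)).card ≠ 0 := by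
    by_contra h
    push_neg at h
    have h0 : (∑ y ∈ N v, ((N v).filter (fun z => z ≠ y ∧ ¬ G.Adj y z)).card) = 0 :=
      Finset.sum_eq_zero h
    have h2 := hsum v
    omega
  obtain ⟨c, hcN, hmc⟩ := hex
  obtain ⟨d, hd⟩ := Finset.card_pos.mp (Nat.pos_of_ne_zero hmc)
  rw [Finset.mem_filter] at hd
  obtain ⟨hdN, hdc, hncd⟩ := hd
  have hcd : c ≠ d := hdc.symm
  -- the two other vertices a b of N v
  have hsubcd : ({c, d} : Finset V) ⊆ N v :=
    Finset.insert_subset_iff.mpr ⟨hcN, Finset.singleton_subset_iff.mpr hdN⟩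
  have hRcard : ((N v) \ {c, d}).card = 2 := by
    rw [Finset.card_sdiff_of_subset hsubcd, hcard, Finset.card_pair hcd]
  obtain ⟨a, b, hab, hR⟩ := Finset.card_eq_two.mp hRcard
  have haR : a ∈ (N v) \ {c, d} := hR ▸ Finset.mem_insert_self a {b}
  have hbR : b ∈ (N v) \ {c, d} := hR ▸ Finset.mem_insert_of_mem (Finset.mem_singleton_self b)
  rw [Finset.mem_sdiff, Finset.mem_insert, Finset.mem_singleton] at haR hbR
  obtain ⟨haN, hacd⟩ := haR
  obtain ⟨hbN, hbcd⟩ := hbR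
  push_neg at hacd hbcd
  obtain ⟨hac_ne, had_ne⟩ := hacd
  obtain ⟨hbc_ne, hbd_ne⟩ := hbcd
  have hNv : N v = {a, b, c, d} := by
    rw [← Finset.sdiff_union_of_subset hsubcd, hR]
    ext z
    simp only [Finset.mem_union, Finset.mem_insert, Finset.mem_singleton]
    tauto
  -- the sum over N v splits into four terms
  have hsum4 : ((N v).filter (fun z => z ≠ a ∧ ¬ G.Adj a z)).card
      + ((N v).filter (fun z => z ≠ b ∧ ¬ G.Adj b z)).card
      + ((N v).filter (fun z => z ≠ c ∧ ¬ G.Adj c z)).card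
      + ((N v).filter (fun z => z ≠ d ∧ ¬ G.Adj d z)).card = 2 := by
    rw [hNv]
    have h2 := hsum v
    rw [hNv] at h2
    rw [Finset.sum_insert (by simp [hab, hac_ne, had_ne]),
        Finset.sum_insert (by simp [hbc_ne, hbd_ne]),
        Finset.sum_pair hcd] at h2
    omega
  have hmc1 : 0 < ((N v).filter (fun z => z ≠ c ∧ ¬ G.Adj c z)).card :=
    Nat.pos_of_ne_zero hmc
  have hmd1 : 0 < ((N v).filter (fun z => z ≠ d ∧ ¬ G.Adj d z)).card :=
    Finset.card_pos.mpr ⟨c, Finset.mem_filter.mpr ⟨hcN, hcd, fun h => hncd h.symm⟩⟩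
  have hma : ((N v).filter (fun z => z ≠ a ∧ ¬ G.Adj a z)).card = 0 := by omega
  have hmb : ((N v).filter (fun z => z ≠ b ∧ ¬ G.Adj b z)).card = 0 := by omega
  have hadj_a : ∀ z ∈ N v, z ≠ a → G.Adj a z := by
    intro z hz hne
    by_contra hcon
    have hmem : z ∈ (N v).filter (fun z => z ≠ a ∧ ¬ G.Adj a z) :=
      Finset.mem_filter.mpr ⟨hz, hne, hcon⟩
    have := Finset.card_pos.mpr ⟨z, hmem⟩
    omega
  have hadj_b : ∀ z ∈ N v, z ≠ b → G.Adj b z := by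
    intro z hz hne
    by_contra hcon
    have hmem : z ∈ (N v).filter (fun z => z ≠ b ∧ ¬ G.Adj b z) :=
      Finset.mem_filter.mpr ⟨hz, hne, hcon⟩
    have := Finset.card_pos.mpr ⟨z, hmem⟩
    omega
  have hAab : G.Adj a b := hadj_a b hbN hab.symm
  have hAac : G.Adj a c := hadj_a c hcN hac_ne.symm
  have hAad : G.Adj a d := hadj_a d hdN had_ne.symm
  have hAbc : G.Adj b c := hadj_b c hcN hbc_ne.symm
  have hAbd : G.Adj b d := hadj_b d hdN hbd_ne.symm
  have hAva : G.Adj v a := (hmemN v a).mp haN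
  have hAvb : G.Adj v b := (hmemN v b).mp hbN
  have hAvc : G.Adj v c := (hmemN v c).mp hcN
  have hAvd : G.Adj v d := (hmemN v d).mp hdN
  have hva_ne : v ≠ a := by rintro rfl; exact hvv haN
  have hvb_ne : v ≠ b := by rintro rfl; exact hvv hbN
  have hvc_ne : v ≠ c := by rintro rfl; exact hvv hcN
  have hvd_ne : v ≠ d := by rintro rfl; exact hvv hdN
  -- the neighbourhoods of a and b are completely determined
  have hsubNa : ({v, b, c, d} : Finset V) ⊆ N a := by
    intro z hz
    rw [hmemN]
    simp only [Finset.mem_insert, Finset.mem_singleton] at hz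
    rcases hz with rfl | rfl | rfl | rfl
    exacts [hAva.symm, hAab, hAac, hAad]
  have hcard_vbcd : ({v, b, c, d} : Finset V).card = 4 := by
    rw [Finset.card_insert_of_notMem (by simp [hvb_ne, hvc_ne, hvd_ne]),
        Finset.card_insert_of_notMem (by simp [hbc_ne, hbd_ne]),
        Finset.card_pair hcd]
  have hNa : N a = {v, b, c, d} :=
    (Finset.eq_of_subset_of_card_le hsubNa (by rw [hcard, hcard_vbcd])).symm
  have hsubNb : ({v, a, c, d} : Finset V) ⊆ N b := by
    intro z hz
    rw [hmemN]
    simp only [Finset.mem_insert, Finset.mem_singleton] at hz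
    rcases hz with rfl | rfl | rfl | rfl
    exacts [hAvb.symm, hAab.symm, hAbc, hAbd]
  have hcard_vacd : ({v, a, c, d} : Finset V).card = 4 := by
    rw [Finset.card_insert_of_notMem (by simp [hva_ne, hvc_ne, hvd_ne]),
        Finset.card_insert_of_notMem (by simp [hac_ne, had_ne]),
        Finset.card_pair hcd]
  have hNb : N b = {v, a, c, d} :=
    (Finset.eq_of_subset_of_card_le hsubNb (by rw [hcard, hcard_vacd])).symm
  -- the fourth neighbour x of c
  have hsubNc : ({v, a, b} : Finset V) ⊆ N c := by
    intro z hz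
    rw [hmemN]
    simp only [Finset.mem_insert, Finset.mem_singleton] at hz
    rcases hz with rfl | rfl | rfl
    exacts [hAvc.symm, hAac.symm, hAbc.symm]
  have hcard_vab : ({v, a, b} : Finset V).card = 3 := by
    rw [Finset.card_insert_of_notMem (by simp [hva_ne, hvb_ne]),
        Finset.card_pair hab]
  have hxex : ((N c) \ {v, a, b}).Nonempty := by
    rw [← Finset.card_pos, Finset.card_sdiff_of_subset hsubNc, hcard, hcard_vab]
    omega
  obtain ⟨x, hx⟩ := hxex
  rw [Finset.mem_sdiff, Finset.mem_insert, Finset.mem_insert, Finset.mem_singleton] at hx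
  obtain ⟨hxNc, hxvab⟩ := hx
  push_neg at hxvab
  obtain ⟨hxv, hxa, hxb⟩ := hxvab
  have hAcx : G.Adj c x := (hmemN c x).mp hxNc
  have hxd : x ≠ d := by rintro rfl; exact hncd hAcx
  have hxc : x ≠ c := fun h => G.irrefl (h ▸ hAcx)
  have hnvx : ¬ G.Adj v x := by
    intro h
    have : x ∈ N v := (hmemN v x).mpr h
    rw [hNv] at this
    simp only [Finset.mem_insert, Finset.mem_singleton] at this
    rcases this with rfl | rfl | rfl | rfl
    exacts [hxa rfl, hxb rfl, hxc rfl, hxd rfl]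
  have hnax : ¬ G.Adj a x := by
    intro h
    have : x ∈ N a := (hmemN a x).mpr h
    rw [hNa] at this
    simp only [Finset.mem_insert, Finset.mem_singleton] at this
    rcases this with rfl | rfl | rfl | rfl
    exacts [hxv rfl, hxb rfl, hxc rfl, hxd rfl]
  have hnbx : ¬ G.Adj b x := by
    intro h
    have : x ∈ N b := (hmemN b x).mpr h
    rw [hNb] at this
    simp only [Finset.mem_insert, Finset.mem_singleton] at this
    rcases this with rfl | rfl | rfl | rfl
    exacts [hxv rfl, hxa rfl, hxc rfl, hxd rfl]
  -- final contradiction: x has at least three non-neighbours in N c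
  have hlow : 3 ≤ ((N c).filter (fun z => z ≠ x ∧ ¬ G.Adj x z)).card := by
    rw [← hcard_vab]
    apply Finset.card_le_card
    intro z hz
    rw [Finset.mem_filter]
    refine ⟨hsubNc hz, ?_⟩
    simp only [Finset.mem_insert, Finset.mem_singleton] at hz
    rcases hz with rfl | rfl | rfl
    · exact ⟨hxv.symm, fun h => hnvx h.symm⟩
    · exact ⟨hxa.symm, fun h => hnax h.symm⟩
    · exact ⟨hxb.symm, fun h => hnbx h.symm⟩
  have hup : ((N c).filter (fun z => z ≠ x ∧ ¬ G.Adj x z)).card ≤ 2 := by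
    have h2 := hsum c
    calc ((N c).filter (fun z => z ≠ x ∧ ¬ G.Adj x z)).card
        ≤ ∑ y ∈ N c, ((N c).filter (fun z => z ≠ y ∧ ¬ G.Adj y z)).card :=
          Finset.single_le_sum (f := fun y => ((N c).filter (fun z => z ≠ y ∧ ¬ G.Adj y z)).card)
            (fun i _ => Nat.zero_le _) hxNc
      _ = 2 := h2
  omega
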